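/- Suppose a cop-win graph G has rank cardinality vector (a, b, c, 1) for some positive integers a, b, c (so G has corner rank 4 and exactly one vertex of corner rank 1). Then there is a vertex of corner rank 3 or 4 in G that dominates the set X_2 of vertices of corner rank 2, i.e. is adjacent to every vertex of corner rank 2. -/

import Mathlib

namespace CopsRobbers

variable {V : Type*}

/-- The closed neighborhood of `v` within the vertex set `S` (graphs are reflexive,
so `v` itself belongs to its closed neighborhood). -/
def closedNbhd (G : SimpleGraph V) (S : Set V) (v : V) : Set V :=
  {u | u ∈ S ∧ (u = v ∨ G.Adj u v)}

/-- `v` is a strict corner of the subgraph induced on `S`: some other vertex `w ∈ S`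
strictly corners `v`, i.e. `N[v] ⊊ N[w]` within `S`. -/
def StrictCorner (G : SimpleGraph V) (S : Set V) (v : V) : Prop :=
  v ∈ S ∧ ∃ w ∈ S, w ≠ v ∧ closedNbhd G S v ⊂ closedNbhd G S w

/-- The remaining vertex sets of the corner ranking procedure (0-indexed auxiliary
version): at each step all current strict corners are removed. -/
def stageAux (G : SimpleGraph V) : ℕ → Set V
  | 0 => Set.univ
  | n + 1 => stageAux G n \ {v | StrictCorner G (stageAux G n) v}

/-- `stage G k` is the vertex set of `G^(k)` (for `k ≥ 1`), so `stage G 1 = V(G)`. -/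
def stage (G : SimpleGraph V) (k : ℕ) : Set V := stageAux G (k - 1)

/-- The corner rank of a vertex: the least `k ≥ 1` such that `v` is a strict corner
of `G^(k)`, or `G^(k)` is a clique still containing `v`; and `⊤` (that is, `∞`) if
there is no such `k`. -/
noncomputable def cornerRank (G : SimpleGraph V) (v : V) : ℕ∞ :=
  sInf {k : ℕ∞ | ∃ n : ℕ, k = (n : ℕ∞) ∧ 1 ≤ n ∧
    (StrictCorner G (stage G n) v ∨ (G.IsClique (stage G n) ∧ v ∈ stage G n))}

/-- The corner rank of a graph: the largest corner rank of a vertex. -/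
noncomputable def graphRank (G : SimpleGraph V) : ℕ∞ := ⨆ v, cornerRank G v

/-- A graph is cop-win iff every vertex has finite corner rank. -/
def CopWin (G : SimpleGraph V) : Prop := ∀ v, cornerRank G v ≠ ⊤

/-- `v` dominates the set `S`: `v` is (reflexively) adjacent to every vertex of `S`. -/
def Dominates (G : SimpleGraph V) (v : V) (S : Set V) : Prop :=
  ∀ u ∈ S, u = v ∨ G.Adj v u

/-- A cop-win graph of corner rank `α ≥ 2` is `tp1` if some vertex of corner rank `α`
dominates the vertex set of `G^(α-1)`. -/
def Tp1 (G : SimpleGraph V) : Prop :=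
  ∃ α : ℕ, 2 ≤ α ∧ graphRank G = (α : ℕ∞) ∧
    ∃ v, cornerRank G v = (α : ℕ∞) ∧ Dominates G v (stage G (α - 1))

/-- `G` realizes the vector `(x_α, …, x_1)` (written as the list `[x_α, …, x_1]`):
`G` is cop-win of corner rank `α` and for each `k`, `x_k` is the number of vertices
of corner rank `k`. -/
def Realizes (G : SimpleGraph V) (x : List ℕ) : Prop :=
  CopWin G ∧ graphRank G = (x.length : ℕ∞) ∧
  ∀ i : Fin x.length,
    x.get i = {v | cornerRank G v = ((x.length - (i : ℕ) : ℕ) : ℕ∞)}.ncard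

/-- `G` r-realizes `x` (for `r ∈ {0,1}`): `G` realizes `x` and `G` is tp-r. -/
def RRealizes (G : SimpleGraph V) (r : ℕ) (x : List ℕ) : Prop :=
  Realizes G x ∧ (Tp1 G ↔ r = 1)

/-- A vector is realizable if it is the rank cardinality vector of some finite cop-win graph. -/
def Realizable (x : List ℕ) : Prop :=
  ∃ (W : Type) (_ : Fintype W) (G : SimpleGraph W), Realizes G x

/-- A vector is r-realizable if some finite tp-r cop-win graph realizes it. -/
def RRealizable (r : ℕ) (x : List ℕ) : Prop :=
  ∃ (W : Type) (_ : Fintype W) (G : SimpleGraph W), RRealizes G r x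

open Classical in
/-- The capture time of a cop-win graph: `cr(G) - r(G)`. -/
noncomputable def captureTime (G : SimpleGraph V) : ℕ :=
  (graphRank G).toNat - (if Tp1 G then 1 else 0)

end CopsRobbers
namespace CopsRobbers

variable {V : Type*}

/-- The defining property appearing in `cornerRank`. -/
def PropAt (G : SimpleGraph V) (n : ℕ) (v : V) : Prop :=
  StrictCorner G (stage G n) v ∨ (G.IsClique (stage G n) ∧ v ∈ stage G n)

lemma cr_le (G : SimpleGraph V) {n : ℕ} {v : V} (hn : 1 ≤ n) (hp : PropAt G n v) :
    cornerRank G v ≤ (n : ℕ∞) :=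
  sInf_le ⟨n, rfl, hn, hp⟩

lemma cr_one_le (G : SimpleGraph V) (v : V) : 1 ≤ cornerRank G v := by
  apply le_sInf
  rintro k ⟨m, rfl, hm, -⟩
  exact_mod_cast hm

lemma cr_spec (G : SimpleGraph V) {n : ℕ} {v : V} (h : cornerRank G v = (n : ℕ∞)) :
    PropAt G n v := by
  by_contra hP
  have hmem : ((n : ℕ∞)) ∉ {k : ℕ∞ | ∃ m : ℕ, k = (m : ℕ∞) ∧ 1 ≤ m ∧ PropAt G m v} := by
    rintro ⟨m, hm, hm1, hmp⟩
    have hmn : m = n := by exact_mod_cast hm.symm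
    exact hP (hmn ▸ hmp)
  have hlb : ((n + 1 : ℕ) : ℕ∞) ≤ cornerRank G v := by
    apply le_sInf
    rintro k ⟨m, rfl, hm1, hmp⟩
    have h1 : (n : ℕ∞) ≤ (m : ℕ∞) := h ▸ sInf_le ⟨m, rfl, hm1, hmp⟩
    have h2 : n ≤ m := by exact_mod_cast h1
    have h3 : m ≠ n := fun e => hmem ⟨m, by rw [e], hm1, hmp⟩
    exact_mod_cast (by omega : n + 1 ≤ m)
  rw [h] at hlb
  have : n + 1 ≤ n := by exact_mod_cast hlb
  omega

end CopsRobbers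
/-- if a cop-win graph realizes `(a, b, c, 1)`, then some vertex of corner
rank 3 or 4 dominates the set of vertices of corner rank 2. -/
theorem CopsRobbers.rank3or4_dominates_rank2
    {V : Type} [Fintype V] (G : SimpleGraph V) (a b c : ℕ)
    (ha : 1 ≤ a) (hb : 1 ≤ b) (hc : 1 ≤ c)
    (h : CopsRobbers.Realizes G [a, b, c, 1]) :
    ∃ x : V, (CopsRobbers.cornerRank G x = 3 ∨ CopsRobbers.cornerRank G x = 4) ∧
      CopsRobbers.Dominates G x {v | CopsRobbers.cornerRank G v = 2} := by
  classical
  obtain ⟨hcw, hrank, hcard⟩ := h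
  have hrank4 : graphRank G = (4 : ℕ∞) := by
    rw [hrank]; norm_num
  have hcard1 : {v | cornerRank G v = (1 : ℕ∞)}.ncard = 1 := by
    have h1 := hcard ⟨3, by norm_num⟩
    norm_num at h1
    exact h1.symm
  have hcarda : {v | cornerRank G v = (4 : ℕ∞)}.ncard = a := by
    have h1 := hcard ⟨0, by norm_num⟩
    norm_num at h1
    exact h1.symm
  -- every rank is at most 4
  have hle4 : ∀ v, cornerRank G v ≤ (4 : ℕ∞) := fun v => hrank4 ▸ le_iSup (cornerRank G) v
  -- a vertex of rank 4 exists
  obtain ⟨z, hz⟩ : ∃ z, cornerRank G z = (4 : ℕ∞) := by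
    have : {v | cornerRank G v = (4 : ℕ∞)}.Nonempty := by
      apply Set.nonempty_of_ncard_ne_zero; omega
    exact this
  -- the unique vertex of rank 1
  obtain ⟨u, hu⟩ := Set.ncard_eq_one.mp hcard1
  have hu1 : cornerRank G u = (1 : ℕ∞) := by
    have : u ∈ ({u} : Set V) := rfl
    rw [← hu] at this; exact this
  have hstage1 : stage G 1 = (Set.univ : Set V) := rfl
  -- u is a strict corner of stage 1
  have husc : StrictCorner G (stage G 1) u := by
    rcases cr_spec G (by exact_mod_cast hu1) with hsc | ⟨hcl, -⟩
    · exact hsc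
    · exfalso
      have : cornerRank G z ≤ ((1 : ℕ) : ℕ∞) :=
        cr_le G le_rfl (Or.inr ⟨hcl, by rw [hstage1]; trivial⟩)
      rw [hz] at this
      norm_num at this
  -- strict corners of stage 1 are exactly {u}
  have hSC : {v | StrictCorner G (stage G 1) v} = {u} := by
    apply Set.Subset.antisymm
    · intro x hx
      have hle : cornerRank G x ≤ ((1 : ℕ) : ℕ∞) := cr_le G le_rfl (Or.inl hx)
      have hx1 : cornerRank G x = (1 : ℕ∞) :=
        le_antisymm (by exact_mod_cast hle) (cr_one_le G x)
      rw [← hu]; exact hx1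
    · intro x hx
      rw [Set.mem_singleton_iff] at hx
      subst hx; exact husc
  have hS2 : stage G 2 = (Set.univ : Set V) \ {u} := by
    show stageAux G 1 = _
    rw [stageAux]
    have : stageAux G 0 = stage G 1 := rfl
    rw [this, hSC, hstage1]
  -- z is in stage 2
  have hz2 : z ∈ stage G 2 := by
    rw [hS2]
    refine ⟨trivial, fun hzu => ?_⟩
    rw [Set.mem_singleton_iff] at hzu
    rw [hzu, hu1] at hz
    norm_num at hz
  -- every rank-2 vertex is a strict corner of stage 2
  have hr2corner : ∀ v, cornerRank G v = (2 : ℕ∞) → StrictCorner G (stage G 2) v := by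
    intro v hv
    rcases cr_spec G (show cornerRank G v = ((2 : ℕ) : ℕ∞) by exact_mod_cast hv) with hsc | ⟨hcl, -⟩
    · exact hsc
    · exfalso
      have : cornerRank G z ≤ ((2 : ℕ) : ℕ∞) :=
        cr_le G (by norm_num) (Or.inr ⟨hcl, hz2⟩)
      rw [hz] at this
      norm_num at this
  -- every rank-2 vertex is adjacent to u
  have hadj_u : ∀ v, cornerRank G v = (2 : ℕ∞) → G.Adj v u := by
    intro v hv
    have hvne : v ≠ u := by
      rintro rfl; rw [hu1] at hv; norm_num at hv
    by_contra hnadj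
    obtain ⟨-, w', hw'S, hw'ne, hss⟩ := hr2corner v hv
    -- then v would be a strict corner of stage 1
    have hsc1 : StrictCorner G (stage G 1) v := by
      refine ⟨by rw [hstage1]; trivial, w', by rw [hstage1]; trivial, hw'ne, ?_⟩
      have memS2 : ∀ x : V, x ≠ u → x ∈ stage G 2 := by
        intro x hx; rw [hS2]; exact ⟨trivial, hx⟩
      have ne_u : ∀ x : V, (x = v ∨ G.Adj x v) → x ≠ u := by
        rintro x hx rfl
        rcases hx with rfl | hadj
        · exact hvne rfl
        · exact hnadj hadj.symm
      constructor
      · intro x hx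
        obtain ⟨-, hx2⟩ := hx
        have : x ∈ closedNbhd G (stage G 2) v := ⟨memS2 x (ne_u x hx2), hx2⟩
        have := hss.1 this
        exact ⟨by rw [hstage1]; trivial, this.2⟩
      · intro hsub
        obtain ⟨y, hy, hyn⟩ := Set.exists_of_ssubset hss
        have hy1 : y ∈ closedNbhd G (stage G 1) w' := ⟨by rw [hstage1]; trivial, hy.2⟩
        have hy1v := hsub hy1
        exact hyn ⟨memS2 y (ne_u y hy1v.2), hy1v.2⟩
    have hle : cornerRank G v ≤ ((1 : ℕ) : ℕ∞) := cr_le G le_rfl (Or.inl hsc1)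
    rw [hv] at hle
    norm_num at hle
  obtain ⟨-, w1, -, hw1ne, hssu⟩ := husc
  have hw1S2 : w1 ∈ stage G 2 := by
    rw [hS2]; exact ⟨trivial, hw1ne⟩
  -- w1 dominates X2 within stage 2
  have hw1dom : {v | cornerRank G v = (2 : ℕ∞)} ⊆ closedNbhd G (stage G 2) w1 := by
    intro v hv
    have hvadj : G.Adj v u := hadj_u v hv
    have hvS2 : v ∈ stage G 2 := by
      rw [hS2]; exact ⟨trivial, fun e => by
        rw [Set.mem_singleton_iff] at e
        exact (G.loopless.irrefl u) (e ▸ hvadj)⟩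
    have hvN1u : v ∈ closedNbhd G (stage G 1) u :=
      ⟨by rw [hstage1]; trivial, Or.inr hvadj⟩
    have := hssu.1 hvN1u
    exact ⟨hvS2, this.2⟩
  -- take a maximal dominator in stage 2
  set T := {w : V | w ∈ stage G 2 ∧
    {v | cornerRank G v = (2 : ℕ∞)} ⊆ closedNbhd G (stage G 2) w} with hT
  have hTne : T.Nonempty := ⟨w1, hw1S2, hw1dom⟩
  obtain ⟨w, hwT, hwmax⟩ :=
    Set.Finite.exists_maximalFor (fun w => (closedNbhd G (stage G 2) w).ncard) T
      (Set.toFinite T) hTne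
  have hwne2 : cornerRank G w ≠ (2 : ℕ∞) := by
    intro hw2
    obtain ⟨-, w', hw'S, hw'ne, hss⟩ := hr2corner w hw2
    have hw'T : w' ∈ T := ⟨hw'S, hwT.2.trans hss.subset⟩
    have hlt : (closedNbhd G (stage G 2) w).ncard < (closedNbhd G (stage G 2) w').ncard :=
      Set.ncard_lt_ncard hss (Set.toFinite _)
    exact absurd (hwmax hw'T hlt.le) (not_le.mpr hlt)
  have hwne1 : cornerRank G w ≠ (1 : ℕ∞) := by
    intro hw1'
    have hwu : w ∈ ({u} : Set V) := by rw [← hu]; exact hw1'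
    rw [Set.mem_singleton_iff] at hwu
    have := hwT.1
    rw [hS2, hwu] at this
    exact this.2 rfl
  have hne_top := hcw w
  refine ⟨w, ?_, ?_⟩
  · lift cornerRank G w to ℕ using hne_top with n hn
    have h1n : 1 ≤ n := by
      have := cr_one_le G w; rw [← hn] at this; exact_mod_cast this
    have h4n : n ≤ 4 := by
      have := hle4 w; rw [← hn] at this; exact_mod_cast this
    have hn2 : n ≠ 2 := fun e => hwne2 (by rw [e]; norm_num)
    have hn1 : n ≠ 1 := fun e => hwne1 (by rw [e]; norm_num)
    have : n = 3 ∨ n = 4 := by omega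
    rcases this with rfl | rfl
    · left; norm_num
    · right; norm_num
  · intro v hv
    have hmem := hwT.2 hv
    rcases hmem.2 with rfl | hadj
    · exact Or.inl rfl
    · exact Or.inr hadj.symm
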